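/- There exists an absolute constant n₀ ∈ ℕ such that the following holds for all n ≥ n₀. Let K be a class of functions [0,1] → [0,1], and let q₁ < q₂ < ⋯ < q_n be points of [1/4, 3/4] such that for every sign vector σ ∈ {−1, +1}ⁿ there exists κ ∈ K with sign₊(κ(qᵢ) − 1/2) = σᵢ for all i ∈ [n]. For a vector y = (y₁, …, y_n) ∈ {0,1}ⁿ, let J_y be the probability distribution on [0,1] × {0,1} in which p is uniform over {q₁, …, q_n} and the outcome equals yᵢ deterministically when p = qᵢ. If y₁, …, y_n are drawn independently with yᵢ ~ Bernoulli(qᵢ), then the probability that CDL_K(J_y) ≥ 1/8 is at least 5/6. -/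

import Mathlib

open MeasureTheory Set

noncomputable section

/-- Expected loss of prediction `p` when the outcome is `y ~ Bernoulli(q)`:
`ℓ(p,q) = q·ℓ(p,1) + (1−q)·ℓ(p,0)`. -/
def elos (ℓ : ℝ → ℝ → ℝ) (p q : ℝ) : ℝ := q * ℓ p 1 + (1 - q) * ℓ p 0

/-- A loss is proper if truthful prediction minimizes expected loss. -/
def IsProper (ℓ : ℝ → ℝ → ℝ) : Prop :=
  ∀ p ∈ Icc (0:ℝ) 1, ∀ q ∈ Icc (0:ℝ) 1, elos ℓ q q ≤ elos ℓ p q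

/-- The class `L*` of proper losses with `|ℓ(p,1) − ℓ(p,0)| ≤ 1`. -/
def Lstar (ℓ : ℝ → ℝ → ℝ) : Prop :=
  IsProper ℓ ∧ ∀ p ∈ Icc (0:ℝ) 1, |ℓ p 1 - ℓ p 0| ≤ 1

/-- Projection onto `[0,1]`. -/
def proj01 (x : ℝ) : ℝ := max 0 (min 1 x)

/-- Calibration decision loss of `J` relative to the post-processing class `K`:
`sup` over `ℓ ∈ L*` and `κ ∈ K` of `E[ℓ(p,y) − ℓ(κ(p),y)]`. -/
def CDL (K : Set (ℝ → ℝ)) (J : Measure (ℝ × ℝ)) : ℝ :=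
  sSup { x | ∃ ℓ κ, Lstar ℓ ∧ κ ∈ K ∧
    x = ∫ z, (ℓ z.1 z.2 - ℓ (κ z.1) z.2) ∂J }

/-- `sign_s(t)`: `+1` if `t > 0`, `−1` if `t < 0`, and `s` if `t = 0`. -/
def signS (s t : ℝ) : ℝ := if 0 < t then 1 else if t < 0 then -1 else s

/-- `sign₊ = sign_{+1}`. -/
def signP (t : ℝ) : ℝ := signS 1 t

/-- The V-shaped loss `ℓ_{v,s}(p,y) = −sign_s(p−v)·(y−v)`. -/
def vloss (v s : ℝ) : ℝ → ℝ → ℝ := fun p y => -(signS s (p - v)) * (y - v)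

/-- A valid post-processing class: maps `[0,1]` to `[0,1]`, contains the identity, and
is translation invariant. -/
def ValidClass (K : Set (ℝ → ℝ)) : Prop :=
  (∀ κ ∈ K, ∀ p ∈ Icc (0:ℝ) 1, κ p ∈ Icc (0:ℝ) 1) ∧
  ((fun p : ℝ => p) ∈ K) ∧
  (∀ s t : ℝ, ∀ κ ∈ K, (fun p : ℝ => proj01 (κ (proj01 (p + s)) + t)) ∈ K)

/-- Upper thresholds of a post-processing class. -/
def thr (K : Set (ℝ → ℝ)) : Set (ℝ → ℝ) :=
  { w | ∃ κ ∈ K, w = fun p => signP (κ p - 1/2) }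

/-- Modified thresholds: `thr(K)` together with all lower thresholds of the identity. -/
def thr' (K : Set (ℝ → ℝ)) : Set (ℝ → ℝ) :=
  thr K ∪ { w | ∃ v : ℝ, w = fun p => -signP (p - v) }

/-- Weight-restricted calibration error `CE_W(J) = sup_{w ∈ W} E[w(p)(y − p)]`. -/
def CE (W : Set (ℝ → ℝ)) (J : Measure (ℝ × ℝ)) : ℝ :=
  sSup { x | ∃ w ∈ W, x = ∫ z, w z.1 * (z.2 - z.1) ∂J }

/-- A probability distribution on `[0,1] × {0,1}`. -/
def IsPredDist (J : Measure (ℝ × ℝ)) : Prop :=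
  IsProbabilityMeasure J ∧ ∀ᵐ z ∂J, z.1 ∈ Icc (0:ℝ) 1 ∧ (z.2 = 0 ∨ z.2 = 1)

/-- The class `M₊` of nondecreasing post-processings `[0,1] → [0,1]`. -/
def Mplus : Set (ℝ → ℝ) :=
  { κ | (∀ p ∈ Icc (0:ℝ) 1, κ p ∈ Icc (0:ℝ) 1) ∧ MonotoneOn κ (Icc (0:ℝ) 1) }

/-- The Bernoulli distribution with parameter `p`, as a measure on `ℝ` over `{0,1}`. -/
def bern (p : ℝ) : Measure ℝ :=
  ENNReal.ofReal p • Measure.dirac (1:ℝ) + ENNReal.ofReal (1 - p) • Measure.dirac (0:ℝ)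

/-- The distribution `J_y` on `[0,1] × {0,1}`: `p` uniform over `{q₁,…,q_n}`, with
deterministic outcome `yᵢ` when `p = qᵢ`. -/
def empJ {n : ℕ} (q y : Fin n → ℝ) : Measure (ℝ × ℝ) :=
  (n : ENNReal)⁻¹ • ∑ i, Measure.dirac (q i, y i)


section Aux

lemma abs_signS_le_one (t : ℝ) : |signS 1 t| ≤ 1 := by
  unfold signS; split_ifs <;> norm_num

lemma signS_one_mul_self (t : ℝ) : signS 1 t * t = |t| := by
  unfold signS
  split_ifs with h1 h2
  · rw [one_mul, abs_of_pos h1]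
  · rw [neg_one_mul, abs_of_neg h2]
  · have : t = 0 := le_antisymm (not_lt.1 h1) (not_lt.1 h2)
    simp [this]

lemma signP_mul_self (t : ℝ) : signP t * t = |t| := signS_one_mul_self t

lemma signP_sq (t : ℝ) : signP t * signP t = 1 := by
  unfold signP signS; split_ifs <;> norm_num

lemma elos_vloss (v s p q : ℝ) : elos (vloss v s) p q = -(signS s (p - v)) * (q - v) := by
  unfold elos vloss; ring

lemma vloss_Lstar (v : ℝ) : Lstar (vloss v 1) := by
  constructor
  · intro p _ q _
    rw [elos_vloss, elos_vloss]
    have h1 : signS 1 (p - v) * (q - v) ≤ |q - v| := by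
      calc signS 1 (p - v) * (q - v) ≤ |signS 1 (p - v) * (q - v)| := le_abs_self _
        _ = |signS 1 (p - v)| * |q - v| := abs_mul _ _
        _ ≤ 1 * |q - v| := mul_le_mul_of_nonneg_right (abs_signS_le_one _) (abs_nonneg _)
        _ = |q - v| := one_mul _
    have h2 : signS 1 (q - v) * (q - v) = |q - v| := signS_one_mul_self _
    nlinarith
  · intro p _
    have : vloss v 1 p 1 - vloss v 1 p 0 = -(signS 1 (p - v)) := by unfold vloss; ring
    rw [this, abs_neg]
    exact abs_signS_le_one _

lemma lstar_diff_le {ℓ : ℝ → ℝ → ℝ} (h : Lstar ℓ) {a b t : ℝ}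
    (ha : a ∈ Icc (0:ℝ) 1) (hb : b ∈ Icc (0:ℝ) 1) (ht : t = 0 ∨ t = 1) :
    ℓ a t - ℓ b t ≤ 2 := by
  obtain ⟨hp, hd⟩ := h
  have h0m : (0:ℝ) ∈ Icc (0:ℝ) 1 := by norm_num
  have h1m : (1:ℝ) ∈ Icc (0:ℝ) 1 := by norm_num
  have hda := abs_le.1 (hd a ha)
  have hd0 := abs_le.1 (hd 0 h0m)
  have hd1 := abs_le.1 (hd 1 h1m)
  rcases ht with rfl | rfl
  · have h1 := hp b hb 0 h0m
    have h2 := hp 0 h0m a ha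
    simp only [elos] at h1 h2
    have hub : ℓ a 0 ≤ ℓ 0 0 + 2 := by nlinarith [ha.1, ha.2]
    have hlb : ℓ 0 0 ≤ ℓ b 0 := by nlinarith
    linarith
  · have h1 := hp b hb 1 h1m
    have h2 := hp 1 h1m a ha
    simp only [elos] at h1 h2
    have hub : ℓ a 1 ≤ ℓ 1 1 + 2 := by nlinarith [ha.1, ha.2]
    have hlb : ℓ 1 1 ≤ ℓ b 1 := by nlinarith
    linarith

lemma integrable_dirac_fun {α : Type*} [MeasurableSpace α] [MeasurableSingletonClass α]
    (f : α → ℝ) (a : α) : Integrable f (Measure.dirac a) :=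
  (integrable_const (f a)).congr (ae_eq_dirac f).symm

instance bern_finite (p : ℝ) : IsFiniteMeasure (bern p) := by
  constructor
  simp [bern, ENNReal.add_lt_top, ENNReal.mul_lt_top, ENNReal.ofReal_lt_top]

lemma integrable_bern (p : ℝ) (f : ℝ → ℝ) : Integrable f (bern p) := by
  unfold bern
  exact Integrable.add_measure
    ((integrable_dirac_fun f 1).smul_measure ENNReal.ofReal_ne_top)
    ((integrable_dirac_fun f 0).smul_measure ENNReal.ofReal_ne_top)

lemma integral_bern {p : ℝ} (h0 : 0 ≤ p) (h1 : p ≤ 1) (f : ℝ → ℝ) :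
    ∫ x, f x ∂(bern p) = p * f 1 + (1 - p) * f 0 := by
  unfold bern
  rw [integral_add_measure ((integrable_dirac_fun f 1).smul_measure ENNReal.ofReal_ne_top)
      ((integrable_dirac_fun f 0).smul_measure ENNReal.ofReal_ne_top),
    integral_smul_measure, integral_smul_measure, integral_dirac, integral_dirac,
    ENNReal.toReal_ofReal h0, ENNReal.toReal_ofReal (by linarith : (0:ℝ) ≤ 1 - p)]
  simp [smul_eq_mul]

lemma bern_univ {p : ℝ} (h0 : 0 ≤ p) (h1 : p ≤ 1) : bern p univ = 1 := by
  unfold bern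
  rw [Measure.add_apply, Measure.smul_apply, Measure.smul_apply]
  simp only [measure_univ, smul_eq_mul, mul_one]
  rw [← ENNReal.ofReal_add h0 (by linarith : (0:ℝ) ≤ 1 - p)]
  norm_num

lemma bern_prob {p : ℝ} (h0 : 0 ≤ p) (h1 : p ≤ 1) : IsProbabilityMeasure (bern p) :=
  ⟨bern_univ h0 h1⟩

lemma bern_not01 {p : ℝ} : bern p {x : ℝ | ¬(x = 0 ∨ x = 1)} = 0 := by
  have hA : MeasurableSet {x : ℝ | ¬(x = 0 ∨ x = 1)} := by
    have : {x : ℝ | ¬(x = 0 ∨ x = 1)} = ({0, 1} : Set ℝ)ᶜ := by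
      ext x; simp [Set.mem_compl_iff]
    rw [this]
    exact ((measurableSet_singleton (0:ℝ)).union (measurableSet_singleton 1)).compl
  unfold bern
  rw [Measure.add_apply, Measure.smul_apply, Measure.smul_apply,
    Measure.dirac_apply' _ hA, Measure.dirac_apply' _ hA]
  simp [Set.indicator_of_notMem]

lemma key {n : ℕ} (q : Fin n → ℝ) (f : Fin n → ℝ → ℝ) :
    ∫ y, ∏ i, f i (y i) ∂(Measure.pi fun i => bern (q i))
      = ∏ i, ∫ x, f i x ∂(bern (q i)) :=
  integral_fintype_prod_eq_prod (μ := fun i => bern (q i)) f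

lemma key_int {n : ℕ} (q : Fin n → ℝ) (f : Fin n → ℝ → ℝ) :
    Integrable (fun y => ∏ i, f i (y i)) (Measure.pi fun i => bern (q i)) :=
  Integrable.fin_nat_prod (μ := fun i => bern (q i)) (f := f)
    (fun i => integrable_bern (q i) (f i))

lemma prod_pair {M : Type*} [CommMonoid M] {n : ℕ} {i j : Fin n} (hij : i ≠ j)
    {f : Fin n → M} (hf : ∀ k, k ≠ i → k ≠ j → f k = 1) : ∏ k, f k = f i * f j := by
  classical
  rw [← Finset.mul_prod_erase Finset.univ f (Finset.mem_univ i),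
      ← Finset.mul_prod_erase _ f (Finset.mem_erase.2 ⟨hij.symm, Finset.mem_univ j⟩),
      Finset.prod_eq_one (fun k hk => hf k (Finset.mem_erase.1 (Finset.mem_erase.1 hk).2).1
        (Finset.mem_erase.1 hk).1), mul_one]

lemma integral_pi_single {n : ℕ} {q : Fin n → ℝ} (hq : ∀ j, 0 ≤ q j ∧ q j ≤ 1)
    (i : Fin n) (f : ℝ → ℝ) :
    ∫ y, f (y i) ∂(Measure.pi fun j => bern (q j)) = ∫ x, f x ∂(bern (q i)) := by
  classical
  have h1 : (fun y : Fin n → ℝ => f (y i))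
      = fun y => ∏ k, (fun k t => if k = i then f t else 1) k (y k) := by
    funext y
    rw [Finset.prod_eq_single i (fun b _ hb => by simp [hb]) (fun hi => absurd (Finset.mem_univ i) hi)]
    simp
  rw [h1, key q (fun k t => if k = i then f t else 1), Finset.prod_eq_single i
    (fun b _ hb => by
      simp only [if_neg hb]
      rw [integral_const, measureReal_def, bern_univ (hq b).1 (hq b).2]
      simp)
    (fun hi => absurd (Finset.mem_univ i) hi)]
  simp

lemma integral_pi_pair {n : ℕ} {q : Fin n → ℝ} (hq : ∀ j, 0 ≤ q j ∧ q j ≤ 1)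
    {i j : Fin n} (hij : i ≠ j) (f g : ℝ → ℝ) :
    ∫ y, f (y i) * g (y j) ∂(Measure.pi fun k => bern (q k))
      = (∫ x, f x ∂(bern (q i))) * ∫ x, g x ∂(bern (q j)) := by
  classical
  have h1 : (fun y : Fin n → ℝ => f (y i) * g (y j))
      = fun y => ∏ k, (fun k t => if k = i then f t else if k = j then g t else 1) k (y k) := by
    funext y
    rw [prod_pair hij (fun k hki hkj => by simp [hki, hkj])]
    simp [hij, Ne.symm hij]
  rw [h1, key q (fun k t => if k = i then f t else if k = j then g t else 1),
    prod_pair hij (fun k hki hkj => by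
    simp only [if_neg hki, if_neg hkj]
    rw [integral_const, measureReal_def, bern_univ (hq k).1 (hq k).2]
    simp)]
  simp [hij, Ne.symm hij]

lemma integrable_pi_single {n : ℕ} (q : Fin n → ℝ) (i : Fin n) (f : ℝ → ℝ) :
    Integrable (fun y => f (y i)) (Measure.pi fun j => bern (q j)) := by
  classical
  have h1 : (fun y : Fin n → ℝ => f (y i))
      = fun y => ∏ k, (fun k t => if k = i then f t else 1) k (y k) := by
    funext y
    rw [Finset.prod_eq_single i (fun b _ hb => by simp [hb]) (fun hi => absurd (Finset.mem_univ i) hi)]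
    simp
  rw [h1]
  exact key_int q (fun k t => if k = i then f t else 1)

lemma integrable_pi_pair {n : ℕ} (q : Fin n → ℝ) {i j : Fin n} (hij : i ≠ j) (f g : ℝ → ℝ) :
    Integrable (fun y => f (y i) * g (y j)) (Measure.pi fun k => bern (q k)) := by
  classical
  have h1 : (fun y : Fin n → ℝ => f (y i) * g (y j))
      = fun y => ∏ k, (fun k t => if k = i then f t else if k = j then g t else 1) k (y k) := by
    funext y
    rw [prod_pair hij (fun k hki hkj => by simp [hki, hkj])]
    simp [hij, Ne.symm hij]
  rw [h1]
  exact key_int q (fun k t => if k = i then f t else if k = j then g t else 1)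

lemma empJ_integral {n : ℕ} (q y : Fin n → ℝ) (f : ℝ × ℝ → ℝ) :
    ∫ z, f z ∂(empJ q y) = (n:ℝ)⁻¹ * ∑ i, f (q i, y i) := by
  rw [empJ, integral_smul_measure,
    integral_finset_sum_measure (fun i _ => integrable_dirac_fun f _)]
  simp_rw [integral_dirac]
  rw [smul_eq_mul, ENNReal.toReal_inv, ENNReal.toReal_natCast]

end Aux


section Aux2

/-- The centered weighted sum used for the Chebyshev bound. -/
def Zq {n : ℕ} (q : Fin n → ℝ) (y : Fin n → ℝ) : ℝ :=
  ∑ i, signP (q i - 1/2) * (y i - q i)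

lemma Zq_measurable {n : ℕ} (q : Fin n → ℝ) : Measurable (Zq q) := by
  unfold Zq
  exact Finset.measurable_sum _ fun i _ =>
    ((measurable_pi_apply i).sub measurable_const).const_mul _

lemma Zq_sq_eq {n : ℕ} (q : Fin n → ℝ) (y : Fin n → ℝ) :
    Zq q y * Zq q y = ∑ i, ∑ j,
      (signP (q i - 1/2) * (y i - q i)) * (signP (q j - 1/2) * (y j - q j)) := by
  unfold Zq
  rw [Finset.sum_mul_sum]

lemma Z_term_int {n : ℕ} (q : Fin n → ℝ) (i j : Fin n) :
    Integrable (fun y => (signP (q i - 1/2) * (y i - q i)) * (signP (q j - 1/2) * (y j - q j)))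
      (Measure.pi fun k => bern (q k)) := by
  rcases eq_or_ne i j with rfl | hij
  · exact integrable_pi_single q i
      (fun t => (signP (q i - 1/2) * (t - q i)) * (signP (q i - 1/2) * (t - q i)))
  · exact integrable_pi_pair q hij (fun t => signP (q i - 1/2) * (t - q i))
      (fun t => signP (q j - 1/2) * (t - q j))

lemma Zq_sq_integrable {n : ℕ} (q : Fin n → ℝ) :
    Integrable (fun y => Zq q y * Zq q y) (Measure.pi fun i => bern (q i)) := by
  have h : (fun y : Fin n → ℝ => Zq q y * Zq q y) = fun y => ∑ i, ∑ j,
      (signP (q i - 1/2) * (y i - q i)) * (signP (q j - 1/2) * (y j - q j)) :=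
    funext (Zq_sq_eq q)
  rw [h]
  exact integrable_finset_sum _ fun i _ => integrable_finset_sum _ fun j _ => Z_term_int q i j

lemma Zq_sq_integral_le {n : ℕ} {q : Fin n → ℝ} (hq : ∀ i, q i ∈ Icc (1/4:ℝ) (3/4)) :
    ∫ y, Zq q y * Zq q y ∂(Measure.pi fun i => bern (q i)) ≤ (n:ℝ)/4 := by
  have hq01 : ∀ j, 0 ≤ q j ∧ q j ≤ 1 := fun j => ⟨by linarith [(hq j).1], by linarith [(hq j).2]⟩
  have hgmean : ∀ i, ∫ x, signP (q i - 1/2) * (x - q i) ∂(bern (q i)) = 0 := by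
    intro i
    rw [integral_bern (hq01 i).1 (hq01 i).2]
    ring
  have hgsq : ∀ i, ∫ x, (signP (q i - 1/2) * (x - q i)) * (signP (q i - 1/2) * (x - q i))
      ∂(bern (q i)) ≤ 1/4 := by
    intro i
    rw [integral_bern (hq01 i).1 (hq01 i).2]
    have h2 := signP_sq (q i - 1/2)
    nlinarith [sq_nonneg (q i - 1/2), (hq01 i).1, (hq01 i).2]
  have h : (fun y : Fin n → ℝ => Zq q y * Zq q y) = fun y => ∑ i, ∑ j,
      (signP (q i - 1/2) * (y i - q i)) * (signP (q j - 1/2) * (y j - q j)) :=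
    funext (Zq_sq_eq q)
  rw [h, integral_finset_sum _
    (fun i _ => integrable_finset_sum _ fun j _ => Z_term_int q i j)]
  have e1 : ∀ i : Fin n, ∫ y, ∑ j, (signP (q i - 1/2) * (y i - q i)) *
      (signP (q j - 1/2) * (y j - q j)) ∂(Measure.pi fun k => bern (q k))
      = ∑ j, ∫ y, (signP (q i - 1/2) * (y i - q i)) *
      (signP (q j - 1/2) * (y j - q j)) ∂(Measure.pi fun k => bern (q k)) :=
    fun i => integral_finset_sum _ fun j _ => Z_term_int q i j
  calc ∑ i, ∫ y, ∑ j, (signP (q i - 1/2) * (y i - q i)) *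
          (signP (q j - 1/2) * (y j - q j)) ∂(Measure.pi fun k => bern (q k))
      ≤ ∑ _i : Fin n, (1/4 : ℝ) := by
        refine Finset.sum_le_sum fun i _ => ?_
        rw [e1 i, Finset.sum_eq_single_of_mem i (Finset.mem_univ i) (fun j _ hji => by
          rw [integral_pi_pair hq01 (Ne.symm hji) (fun t => signP (q i - 1/2) * (t - q i))
            (fun t => signP (q j - 1/2) * (t - q j)), hgmean j, mul_zero])]
        calc ∫ y, (signP (q i - 1/2) * (y i - q i)) * (signP (q i - 1/2) * (y i - q i))
                ∂(Measure.pi fun k => bern (q k))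
            = ∫ x, (signP (q i - 1/2) * (x - q i)) * (signP (q i - 1/2) * (x - q i))
                ∂(bern (q i)) := integral_pi_single hq01 i
                  (fun t => (signP (q i - 1/2) * (t - q i)) * (signP (q i - 1/2) * (t - q i)))
          _ ≤ 1/4 := hgsq i
    _ = (n:ℝ)/4 := by
        rw [Finset.sum_const, Finset.card_univ, Fintype.card_fin, nsmul_eq_mul]
        ring

lemma vterm_ge {qi κi yi : ℝ} (hqi1 : 1/4 ≤ qi) (hqi2 : qi ≤ 3/4) (hyi : yi = 0 ∨ yi = 1)
    (hκi : signS 1 (κi - 1/2) = (if yi = 1 then (1:ℝ) else -1)) :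
    1/4 - signP (qi - 1/2) * (yi - qi) ≤ vloss (1/2) 1 qi yi - vloss (1/2) 1 κi yi := by
  have hsi := signS_one_mul_self (qi - 1/2)
  have habs : |qi - 1/2| ≤ 1/4 := abs_le.2 ⟨by linarith, by linarith⟩
  unfold vloss signP
  rw [hκi]
  rcases hyi with rfl | rfl
  · norm_num
    nlinarith [hsi, habs]
  · norm_num
    nlinarith [hsi, habs]

lemma CDL_set_bdd {n : ℕ} (K : Set (ℝ → ℝ))
    (hK : ∀ κ ∈ K, ∀ p ∈ Icc (0:ℝ) 1, κ p ∈ Icc (0:ℝ) 1)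
    {q y : Fin n → ℝ} (hq : ∀ i, q i ∈ Icc (1/4:ℝ) (3/4)) (hy : ∀ i, y i = 0 ∨ y i = 1) :
    ∀ x ∈ {x | ∃ ℓ κ, Lstar ℓ ∧ κ ∈ K ∧
      x = ∫ z, (ℓ z.1 z.2 - ℓ (κ z.1) z.2) ∂(empJ q y)}, x ≤ 2 := by
  rintro x ⟨ℓ, κ, hL, hκ, rfl⟩
  rw [empJ_integral]
  have hbound : ∀ i : Fin n, ℓ (q i) (y i) - ℓ (κ (q i)) (y i) ≤ 2 := fun i =>
    lstar_diff_le hL ⟨by linarith [(hq i).1], by linarith [(hq i).2]⟩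
      (hK κ hκ (q i) ⟨by linarith [(hq i).1], by linarith [(hq i).2]⟩) (hy i)
  calc (n:ℝ)⁻¹ * ∑ i, (ℓ (q i) (y i) - ℓ (κ (q i)) (y i))
      ≤ (n:ℝ)⁻¹ * ∑ _i : Fin n, (2:ℝ) :=
        mul_le_mul_of_nonneg_left (Finset.sum_le_sum fun i _ => hbound i) (by positivity)
    _ ≤ 2 := by
        rw [Finset.sum_const, Finset.card_univ, Fintype.card_fin, nsmul_eq_mul]
        rcases Nat.eq_zero_or_pos n with h | h
        · simp [h]
        · have : (0:ℝ) < n := by exact_mod_cast h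
          rw [inv_mul_eq_div, mul_comm, mul_div_assoc, div_self this.ne', mul_one]

end Aux2

/-- for a class `K` whose thresholds shatter `q₁ < ⋯ < q_n ∈ [1/4,3/4]`,
with `yᵢ ~ Bernoulli(qᵢ)` independent, `CDL_K(J_y) ≥ 1/8` with probability `≥ 5/6`. -/
theorem random_labels_large_CDL :
    ∃ n₀ : ℕ, ∀ n : ℕ, n₀ ≤ n → ∀ K : Set (ℝ → ℝ),
      (∀ κ ∈ K, ∀ p ∈ Icc (0:ℝ) 1, κ p ∈ Icc (0:ℝ) 1) →
      ∀ q : Fin n → ℝ, StrictMono q → (∀ i, q i ∈ Icc (1/4 : ℝ) (3/4)) →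
      (∀ σ : Fin n → ℝ, (∀ i, σ i = 1 ∨ σ i = -1) →
        ∃ κ ∈ K, ∀ i, signP (κ (q i) - 1/2) = σ i) →
      (5/6 : ENNReal) ≤
        Measure.pi (fun i : Fin n => bern (q i)) {y | 1/8 ≤ CDL K (empJ q y)} := by
  classical
  refine ⟨96, fun n hn96 K hK q _hqmono hq hshatter => ?_⟩
  have hn : 0 < n := lt_of_lt_of_le (by norm_num) hn96
  have hnR : (96:ℝ) ≤ (n:ℝ) := by exact_mod_cast hn96
  have hn0 : (0:ℝ) < (n:ℝ) := by linarith
  have hq01 : ∀ j, 0 ≤ q j ∧ q j ≤ 1 := fun j => ⟨by linarith [(hq j).1], by linarith [(hq j).2]⟩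
  haveI hprob : ∀ i : Fin n, IsProbabilityMeasure (bern (q i)) :=
    fun i => bern_prob (hq01 i).1 (hq01 i).2
  set π := Measure.pi fun i : Fin n => bern (q i) with hπ
  haveI : IsProbabilityMeasure π := by rw [hπ]; infer_instance
  -- the bad event
  set B : Set (Fin n → ℝ) := {y | (n:ℝ)/8 < Zq q y} with hB
  have hBmeas : MeasurableSet B := measurableSet_lt measurable_const (Zq_measurable q)
  -- Chebyshev-type bound on the bad event
  have hπB : π B ≤ 1/6 := by
    have hfm : Measurable fun y => ENNReal.ofReal (Zq q y * Zq q y) :=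
      ENNReal.measurable_ofReal.comp ((Zq_measurable q).mul (Zq_measurable q))
    set ε : ENNReal := ENNReal.ofReal ((n:ℝ)/8 * ((n:ℝ)/8)) with hε
    set L : ENNReal := ENNReal.ofReal ((n:ℝ)/4) with hL
    have markov := mul_meas_ge_le_lintegral₀ (μ := π) hfm.aemeasurable ε
    have hlin : ∫⁻ y, ENNReal.ofReal (Zq q y * Zq q y) ∂π
        = ENNReal.ofReal (∫ y, Zq q y * Zq q y ∂π) := by
      rw [hπ]
      exact (ofReal_integral_eq_lintegral_ofReal (Zq_sq_integrable q)
        (Filter.Eventually.of_forall fun y => mul_self_nonneg _)).symm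
    have hsubB : B ⊆ {y | ε ≤ ENNReal.ofReal (Zq q y * Zq q y)} := by
      intro y hy
      have hy' : (n:ℝ)/8 < Zq q y := hy
      have h0 : (0:ℝ) ≤ (n:ℝ)/8 := by positivity
      exact ENNReal.ofReal_le_ofReal (mul_self_le_mul_self h0 hy'.le)
    have hchain : ε * π B ≤ L := by
      calc ε * π B ≤ ε * π {y | ε ≤ ENNReal.ofReal (Zq q y * Zq q y)} :=
            mul_le_mul_right (measure_mono hsubB) ε
        _ ≤ ∫⁻ y, ENNReal.ofReal (Zq q y * Zq q y) ∂π := markov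
        _ = ENNReal.ofReal (∫ y, Zq q y * Zq q y ∂π) := hlin
        _ ≤ L := by
            rw [hL, hπ]
            exact ENNReal.ofReal_le_ofReal (Zq_sq_integral_le hq)
    have hεL : 6 * L ≤ ε := by
      rw [hL, hε, show (6:ENNReal) = ENNReal.ofReal 6 by simp,
        ← ENNReal.ofReal_mul (by norm_num : (0:ℝ) ≤ 6)]
      refine ENNReal.ofReal_le_ofReal ?_
      nlinarith [mul_nonneg (by linarith : (0:ℝ) ≤ (n:ℝ)) (by linarith : (0:ℝ) ≤ (n:ℝ) - 96)]
    have hL0 : L ≠ 0 := by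
      rw [hL]
      exact (ENNReal.ofReal_pos.2 (by linarith)).ne'
    have hLtop : L ≠ ⊤ := by rw [hL]; exact ENNReal.ofReal_ne_top
    have h6 : L * (6 * π B) ≤ L * 1 := by
      rw [mul_one]
      calc L * (6 * π B) = (6 * L) * π B := by ring
        _ ≤ ε * π B := mul_le_mul_left hεL _
        _ ≤ L := hchain
    have h6' : 6 * π B ≤ 1 := (ENNReal.mul_le_mul_iff_right hL0 hLtop).1 h6
    exact (ENNReal.le_div_iff_mul_le (Or.inl (by norm_num : (6:ENNReal) ≠ 0))
      (Or.inl (ENNReal.ofNat_ne_top))).2 (by rwa [mul_comm])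
  -- the labels are almost surely Boolean
  set F : Set (Fin n → ℝ) := {y | ∀ i, y i = 0 ∨ y i = 1} with hF
  have hFc : π Fᶜ = 0 := by
    have hsub : Fᶜ ⊆ ⋃ i, (fun y : Fin n → ℝ => y i) ⁻¹' {x : ℝ | ¬(x = 0 ∨ x = 1)} := by
      intro y hy
      simp only [hF, Set.mem_compl_iff, Set.mem_setOf_eq, not_forall] at hy
      obtain ⟨i, hi⟩ := hy
      exact Set.mem_iUnion.2 ⟨i, hi⟩
    refine measure_mono_null hsub (measure_iUnion_null fun i => ?_)
    have hpre : (fun y : Fin n → ℝ => y i) ⁻¹' {x : ℝ | ¬(x = 0 ∨ x = 1)}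
        = Set.pi univ (Function.update (fun _ : Fin n => (univ : Set ℝ)) i
            {x : ℝ | ¬(x = 0 ∨ x = 1)}) := Set.eval_preimage
    rw [hπ, hpre, Measure.pi_pi]
    exact Finset.prod_eq_zero (Finset.mem_univ i)
      (by rw [Function.update_self]; exact bern_not01)
  -- deterministic part: on Bᶜ ∩ F the CDL is at least 1/8
  have hincl : Bᶜ ∩ F ⊆ {y | 1/8 ≤ CDL K (empJ q y)} := by
    rintro y ⟨hyB, hyF⟩
    have hyB' : Zq q y ≤ (n:ℝ)/8 := not_lt.1 hyB
    have hyF' : ∀ i, y i = 0 ∨ y i = 1 := hyF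
    obtain ⟨κ, hκK, hκ⟩ := hshatter (fun i => if y i = 1 then (1:ℝ) else -1)
      (fun i => by by_cases h : y i = 1 <;> simp [h])
    have hbdd : BddAbove {x | ∃ ℓ κ, Lstar ℓ ∧ κ ∈ K ∧
        x = ∫ z, (ℓ z.1 z.2 - ℓ (κ z.1) z.2) ∂(empJ q y)} :=
      ⟨2, fun x hx => CDL_set_bdd K hK hq hyF' x hx⟩
    have hmem : (∫ z, (vloss (1/2) 1 z.1 z.2 - vloss (1/2) 1 (κ z.1) z.2) ∂(empJ q y))
        ∈ {x | ∃ ℓ κ, Lstar ℓ ∧ κ ∈ K ∧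
            x = ∫ z, (ℓ z.1 z.2 - ℓ (κ z.1) z.2) ∂(empJ q y)} :=
      ⟨vloss (1/2) 1, κ, vloss_Lstar _, hκK, rfl⟩
    have hval : (1/8 : ℝ) ≤
        ∫ z, (vloss (1/2) 1 z.1 z.2 - vloss (1/2) 1 (κ z.1) z.2) ∂(empJ q y) := by
      rw [empJ_integral]
      have hsum : (n:ℝ)/8 ≤
          ∑ i, (vloss (1/2) 1 (q i) (y i) - vloss (1/2) 1 (κ (q i)) (y i)) := by
        have h1 : ∑ i, ((1:ℝ)/4 - signP (q i - 1/2) * (y i - q i))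
            ≤ ∑ i, (vloss (1/2) 1 (q i) (y i) - vloss (1/2) 1 (κ (q i)) (y i)) :=
          Finset.sum_le_sum fun i _ =>
            vterm_ge (hq i).1 (hq i).2 (hyF' i) (hκ i)
        have h2 : ∑ i, ((1:ℝ)/4 - signP (q i - 1/2) * (y i - q i))
            = (n:ℝ)/4 - Zq q y := by
          rw [Finset.sum_sub_distrib, Finset.sum_const, Finset.card_univ,
            Fintype.card_fin, nsmul_eq_mul]
          unfold Zq
          ring
        linarith
      calc (1/8 : ℝ) = (n:ℝ)⁻¹ * ((n:ℝ)/8) := by field_simp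
        _ ≤ (n:ℝ)⁻¹ * ∑ i, (vloss (1/2) 1 (q i) (y i) - vloss (1/2) 1 (κ (q i)) (y i)) :=
            mul_le_mul_of_nonneg_left hsum (by positivity)
    show (1/8 : ℝ) ≤ CDL K (empJ q y)
    unfold CDL
    exact le_trans hval (le_csSup hbdd hmem)
  -- assemble
  calc (5/6 : ENNReal) = 1 - 1/6 := by
        refine (ENNReal.eq_sub_of_add_eq ?_ ?_).symm.symm
        · exact (ENNReal.div_lt_top ENNReal.one_ne_top (by norm_num)).ne
        · rw [ENNReal.div_add_div_same, show (5+1:ENNReal) = 6 by norm_num,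
            ENNReal.div_self (by norm_num) ENNReal.ofNat_ne_top]
    _ ≤ 1 - π B := tsub_le_tsub_left hπB 1
    _ = π Bᶜ := (prob_compl_eq_one_sub hBmeas).symm
    _ = π (Bᶜ ∩ F) := (measure_inter_conull hFc).symm
    _ ≤ π {y | 1/8 ≤ CDL K (empJ q y)} := measure_mono hincl
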